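/- Expected-swap argument: let A be an allocation in which each agent i gets exactly w_i items (w_i positive integers), maximizing Σ_i v_i(A_i) among all such allocations of the same item set. Then every directed cycle C = (i_1,...,i_r) in the weighted envy graph of A has cost Σ_j (v_{i_j}(A_{i_{j+1}})/w_{i_{j+1}} − v_{i_j}(A_{i_j})/w_{i_j}) ≤ 0; consequently A is WEF-able. -/

import Mathlib

/-- Sum of edge costs along the consecutive pairs of a list (a directed path). -/
noncomputable def pathCost {n : ℕ} (c : Fin n → Fin n → ℝ) (p : List (Fin n)) : ℝ :=
  ((p.zip p.tail).map fun q => c q.1 q.2).sum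

/-- Sum of edge costs along a cycle `i₁,…,i_r,i₁`. -/
noncomputable def cycleCost {n : ℕ} (c : Fin n → Fin n → ℝ) (p : List (Fin n)) : ℝ :=
  ((p.zip (p.rotate 1)).map fun q => c q.1 q.2).sum

/-- Weighted envy edge cost without subsidies. -/
noncomputable def envyCost {n : ℕ} (v : Fin n → Fin n → ℝ) (w : Fin n → ℝ) (i j : Fin n) : ℝ :=
  v i j / w j - v i i / w i

/-- Weighted envy edge cost with subsidy vector `s`. -/
noncomputable def envyCostS {n : ℕ} (v : Fin n → Fin n → ℝ) (w : Fin n → ℝ) (s : Fin n → ℝ)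
    (i j : Fin n) : ℝ :=
  (v i j + s j) / w j - (v i i + s i) / w i

/-- `(A,s)` is weighted-envy-free. -/
def IsWEF {n : ℕ} (v : Fin n → Fin n → ℝ) (w : Fin n → ℝ) (s : Fin n → ℝ) : Prop :=
  ∀ i j, (v i j + s j) / w j ≤ (v i i + s i) / w i

/-- The set of costs of (vertex-distinct) directed paths starting at `i`. -/
noncomputable def pathCostsFrom {n : ℕ} (c : Fin n → Fin n → ℝ) (i : Fin n) : Set ℝ :=
  {x | ∃ p : List (Fin n), p ≠ [] ∧ p.Nodup ∧ p.head? = some i ∧ pathCost c p = x}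

section ListLemmas
variable {n : ℕ} (E : Fin n → Fin n → ℝ)

lemma pathCost_single (a : Fin n) : pathCost E [a] = 0 := rfl

lemma pathCost_cons_cons (a b : Fin n) (l : List (Fin n)) :
    pathCost E (a :: b :: l) = E a b + pathCost E (b :: l) := by
  simp [pathCost]

lemma pathCost_append_cons (xs : List (Fin n)) (y : Fin n) (ys : List (Fin n)) :
    pathCost E (xs ++ y :: ys) = pathCost E (xs ++ [y]) + pathCost E (y :: ys) := by
  induction xs with
  | nil => simp [pathCost_single]
  | cons x xs ih =>
    cases xs with
    | nil => simp [pathCost_cons_cons, pathCost_single]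
    | cons x' xs' =>
      simp only [List.cons_append] at ih ⊢
      rw [pathCost_cons_cons, pathCost_cons_cons, ih, add_assoc]

lemma cycleCost_eq (a : Fin n) (l : List (Fin n)) :
    cycleCost E (a :: l) = pathCost E ((a :: l) ++ [a]) := by
  unfold cycleCost pathCost
  rw [List.rotate_cons_succ, List.rotate_zero]
  congr 1
  have h1 : ((a :: l) ++ [a]).tail = l ++ [a] := rfl
  rw [h1]
  have h2 : ((a :: l) ++ [a]).zip (l ++ [a]) = ((a :: l) ++ [a]).zip ((l ++ [a]) ++ []) := by simp
  rw [h2, List.zip_append (by simp)]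
  simp

lemma cycleCost_rotate_one (l : List (Fin n)) :
    cycleCost E (l.rotate 1) = cycleCost E l := by
  match l with
  | [] => simp
  | [a] => simp [List.rotate_singleton]
  | a :: b :: l' =>
    rw [List.rotate_cons_succ, List.rotate_zero]
    have h1 : (b :: l') ++ [a] = b :: (l' ++ [a]) := rfl
    rw [h1, cycleCost_eq, cycleCost_eq]
    have h2 : (b :: (l' ++ [a])) ++ [b] = (b :: l') ++ a :: [b] := by simp
    rw [h2, pathCost_append_cons]
    have h3 : (a :: b :: l') ++ [a] = a :: b :: (l' ++ [a]) := by simp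
    rw [h3, pathCost_cons_cons, pathCost_cons_cons, pathCost_single]
    have h4 : (b :: l') ++ [a] = b :: (l' ++ [a]) := rfl
    rw [h4]; ring

lemma cycleCost_rotate (l : List (Fin n)) (k : ℕ) :
    cycleCost E (l.rotate k) = cycleCost E l := by
  induction k with
  | zero => simp
  | succ k ih => rw [← List.rotate_rotate, cycleCost_rotate_one, ih]

lemma cycleCost_split (a : Fin n) (y z : List (Fin n)) :
    cycleCost E (a :: (y ++ a :: z)) = cycleCost E (a :: y) + cycleCost E (a :: z) := by
  rw [cycleCost_eq, cycleCost_eq, cycleCost_eq]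
  have h1 : (a :: (y ++ a :: z)) ++ [a] = (a :: y) ++ a :: (z ++ [a]) := by simp
  rw [h1, pathCost_append_cons]
  rfl

lemma cycle_nonpos_of_nodup
    (h : ∀ cl : List (Fin n), cl ≠ [] → cl.Nodup → cycleCost E cl ≤ 0) :
    ∀ cl : List (Fin n), cl ≠ [] → cycleCost E cl ≤ 0 := by
  suffices H : ∀ N (cl : List (Fin n)), cl.length ≤ N → cl ≠ [] → cycleCost E cl ≤ 0 by
    exact fun cl hcl => H cl.length cl le_rfl hcl
  intro N
  induction N with
  | zero =>
    intro cl h1 h2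
    cases cl with
    | nil => exact absurd rfl h2
    | cons a l => simp at h1
  | succ N ih =>
    intro cl hlen hne
    by_cases hnd : cl.Nodup
    · exact h cl hne hnd
    · obtain ⟨a, ha⟩ := List.exists_duplicate_iff_not_nodup.2 hnd
      have hcount := List.duplicate_iff_two_le_count.1 ha
      obtain ⟨u, vv, huv⟩ := List.append_of_mem ha.mem
      have hor : a ∈ u ∨ a ∈ vv := by
        by_contra hcon
        push_neg at hcon
        have c1 : u.count a = 0 := List.count_eq_zero.2 hcon.1
        have c2 : vv.count a = 0 := List.count_eq_zero.2 hcon.2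
        rw [huv] at hcount
        simp [List.count_append, List.count_cons, c1, c2] at hcount
      obtain ⟨x, y, z, hxyz⟩ : ∃ x y z, cl = x ++ a :: (y ++ a :: z) := by
        rcases hor with h' | h'
        · obtain ⟨u1, u2, hu⟩ := List.append_of_mem h'
          exact ⟨u1, u2, vv, by rw [huv, hu]; simp⟩
        · obtain ⟨v1, v2, hv'⟩ := List.append_of_mem h'
          exact ⟨u, v1, v2, by rw [huv, hv']⟩
      have hrot : cycleCost E cl = cycleCost E (a :: (y ++ a :: (z ++ x))) := by
        conv_lhs => rw [← cycleCost_rotate E cl x.length]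
        rw [hxyz, List.rotate_append_length_eq]
        congr 1
        simp
      have hlen' : cl.length = x.length + y.length + z.length + 2 := by
        rw [hxyz]; simp; omega
      have h1 := ih (a :: y) (by simp; omega) (by simp)
      have h2 := ih (a :: (z ++ x)) (by simp; omega) (by simp)
      rw [hrot, cycleCost_split]
      linarith
end ListLemmas

lemma sum_piFinset_eval {r : ℕ} {κ : Type*} [DecidableEq κ] (S : Fin r → Finset κ)
    (t : Fin r) (g : κ → ℝ) :
    ∑ f ∈ Fintype.piFinset S, g (f t)
      = (∏ s ∈ Finset.univ.erase t, ((S s).card : ℝ)) * ∑ o ∈ S t, g o := by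
  have h := Finset.prod_univ_sum S (fun s o => if s = t then g o else 1)
  have h1 : ∀ s : Fin r, (∑ o ∈ S s, if s = t then g o else (1:ℝ))
      = if s = t then ∑ o ∈ S t, g o else ((S s).card : ℝ) := by
    intro s; by_cases hs : s = t <;> simp [hs]
  rw [Finset.prod_congr rfl (fun s _ => h1 s)] at h
  rw [Finset.prod_eq_mul_prod_sdiff_singleton_of_mem (Finset.mem_univ t)] at h
  simp only [if_pos rfl] at h
  have h2 : ∀ s ∈ Finset.univ \ {t}, (if s = t then ∑ o ∈ S t, g o else ((S s).card : ℝ))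
      = ((S s).card : ℝ) := by
    intro s hs
    rw [Finset.mem_sdiff, Finset.mem_singleton] at hs
    simp [hs.2]
  rw [Finset.prod_congr rfl h2] at h
  have h3 : ∀ f ∈ Fintype.piFinset S,
      (∏ s : Fin r, if s = t then g (f s) else (1:ℝ)) = g (f t) := by
    intro f _
    rw [Finset.prod_ite_eq' Finset.univ t (fun s => g (f s))]
    simp
  rw [Finset.sum_congr rfl h3] at h
  rw [← h, Finset.erase_eq, mul_comm]; simp

lemma list_get_zip {α β : Type*} {l : List α} {l' : List β} {i : ℕ} (h : i < (l.zip l').length) :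
    (l.zip l').get ⟨i, h⟩ =
      (l.get ⟨i, List.lt_length_left_of_zip h⟩, l'.get ⟨i, List.lt_length_right_of_zip h⟩) := by
  simp [List.getElem_zip]

theorem nodup_cycle_core {n m : ℕ}
    (w : Fin n → ℕ) (hw : ∀ i, 1 ≤ w i)
    (val : Fin n → Fin m → ℝ)
    (A : Fin n → Finset (Fin m))
    (hdisjA : ∀ i j, i ≠ j → Disjoint (A i) (A j))
    (hcardA : ∀ i, (A i).card = w i)
    (hmax : ∀ B : Fin n → Finset (Fin m),
      (∀ i j, i ≠ j → Disjoint (B i) (B j)) →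
      (∀ i, (B i).card = w i) →
      (Finset.univ.biUnion B = Finset.univ.biUnion A) →
      ∑ i, ∑ o ∈ B i, val i o ≤ ∑ i, ∑ o ∈ A i, val i o)
    (v : Fin n → Fin n → ℝ) (hv : ∀ i j, v i j = ∑ o ∈ A j, val i o)
    (cl : List (Fin n)) (hne : cl ≠ []) (hnd : cl.Nodup) :
    cycleCost (envyCost v (fun i => (w i : ℝ))) cl ≤ 0 := by
  classical
  by_cases hlen1 : cl.length = 1
  · obtain ⟨a, rfl⟩ := List.length_eq_one_iff.mp hlen1
    simp [cycleCost, List.rotate_singleton, envyCost]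
  · have hr : 2 ≤ cl.length := by
      have := List.length_pos_iff.mpr hne; omega
    haveI : NeZero cl.length := ⟨by omega⟩
    set W : Fin n → ℝ := fun i => (w i : ℝ) with hWdef
    have hWpos : ∀ i, 0 < W i := fun i => by
      simp only [hWdef]; exact_mod_cast hw i
    set σ : Fin cl.length → Fin n := cl.get with hσdef
    have hσ : Function.Injective σ := List.nodup_iff_injective_get.mp hnd
    have h1lt : 1 % cl.length = 1 := Nat.mod_eq_of_lt (by omega)
    have hval1 : ((1 : Fin cl.length) : ℕ) = 1 := by
      rw [Fin.val_one', h1lt]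
    have hne1 : ∀ t : Fin cl.length, t + 1 ≠ t := by
      intro t h
      have h0 : t + 1 = t + 0 := by rw [add_zero]; exact h
      have h1 : (1 : Fin cl.length) = 0 := add_left_cancel h0
      rw [Fin.one_eq_zero_iff] at h1; omega
    have hzip : cl.zip (cl.rotate 1)
        = List.ofFn (fun t : Fin cl.length => (σ t, σ (t + 1))) := by
      apply List.ext_get
      · simp
      · intro i hh1 hh2
        have h1 : i < cl.length := by simpa using hh1
        rw [list_get_zip, List.get_ofFn, List.get_rotate, Prod.ext_iff]
        constructor
        · show cl.get _ = cl.get _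
          apply congrArg
          apply Fin.ext
          simp
        · show cl.get _ = cl.get _
          apply congrArg
          apply Fin.ext
          simp [Fin.add_def, Fin.val_one', h1lt]
    have hcyc : cycleCost (envyCost v W) cl
        = ∑ t : Fin cl.length, envyCost v W (σ t) (σ (t + 1)) := by
      unfold cycleCost
      rw [hzip, List.map_ofFn, List.sum_ofFn]
      rfl
    have htel : ∀ g : Fin n → ℝ,
        ∑ t : Fin cl.length, g (σ (t + 1)) = ∑ t : Fin cl.length, g (σ t) := by
      intro g
      exact Fintype.sum_equiv (Equiv.addRight (1 : Fin cl.length)) _ _ (fun t => by simp)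
    set S : Fin cl.length → Finset (Fin m) := fun t => A (σ (t + 1)) with hSdef
    set P := Fintype.piFinset S with hPdef
    have hAmem : ∀ {x : Fin m} {i j : Fin n}, x ∈ A i → x ∈ A j → i = j := by
      intro x i j h1 h2
      by_contra hij
      exact Finset.disjoint_left.mp (hdisjA i j hij) h1 h2
    have hkey : ∀ ff ∈ P,
        ∑ t : Fin cl.length, (val (σ t) (ff t) - val (σ (t+1)) (ff t)) ≤ 0 := by
      intro ff hfP
      have hf : ∀ t, ff t ∈ A (σ (t + 1)) := by
        intro t; exact Fintype.mem_piFinset.mp hfP t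
      have hfmem : ∀ {s t : Fin cl.length}, ff s = ff t → s = t := by
        intro s t h
        have hx : ff s ∈ A (σ (t + 1)) := by rw [h]; exact hf t
        have h2 : σ (s+1) = σ (t+1) := hAmem (hf s) hx
        exact add_right_cancel (hσ h2)
      have hftA : ∀ t, ff t ∉ A (σ t) := fun t h => hne1 t (hσ (hAmem (hf t) h))
      have hfprev : ∀ t, ff (t - 1) ∈ A (σ t) := by
        intro t; have := hf (t - 1); rwa [sub_add_cancel] at this
      set B : Fin n → Finset (Fin m) := fun j =>
        if h : ∃ t, σ t = j then insert (ff h.choose) ((A j).erase (ff (h.choose - 1)))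
        else A j with hBdef
      have hBσ : ∀ t, B (σ t) = insert (ff t) ((A (σ t)).erase (ff (t - 1))) := by
        intro t
        have hex : ∃ s, σ s = σ t := ⟨t, rfl⟩
        have hch : hex.choose = t := hσ hex.choose_spec
        simp only [hBdef, dif_pos hex, hch]
      have hBo : ∀ j, (∀ t, σ t ≠ j) → B j = A j := by
        intro j hj
        simp only [hBdef]
        rw [dif_neg (not_exists.mpr hj)]
      have hmemB : ∀ t x, x ∈ B (σ t) ↔ (x = ff t ∨ (x ∈ A (σ t) ∧ x ≠ ff (t-1))) := by
        intro t x
        rw [hBσ t, Finset.mem_insert, Finset.mem_erase]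
        tauto
      have hBcard : ∀ j, (B j).card = (A j).card := by
        intro j
        by_cases hex : ∃ t, σ t = j
        · obtain ⟨t, rfl⟩ := hex
          rw [hBσ t,
            Finset.card_insert_of_notMem (fun hh => hftA t (Finset.mem_of_mem_erase hh)),
            Finset.card_erase_of_mem (hfprev t)]
          have h1 : 1 ≤ (A (σ t)).card := by rw [hcardA]; exact hw _
          omega
        · push_neg at hex; rw [hBo _ hex]
      have hBdisj : ∀ i j, i ≠ j → Disjoint (B i) (B j) := by
        intro i j hij
        rw [Finset.disjoint_left]
        intro x hxi hxj
        by_cases hi : ∃ t, σ t = i <;> by_cases hj : ∃ t, σ t = j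
        · obtain ⟨a, rfl⟩ := hi; obtain ⟨b, rfl⟩ := hj
          have hab : a ≠ b := fun h => hij (congrArg σ h)
          rw [hmemB] at hxi hxj
          rcases hxi with h1 | ⟨h1, h1'⟩ <;> rcases hxj with h2 | ⟨h2, h2'⟩
          · exact hab (hfmem (h1.symm.trans h2))
          · have hx1 : x ∈ A (σ (a+1)) := by rw [h1]; exact hf a
            have hb : a + 1 = b := hσ (hAmem hx1 h2)
            exact h2' (by rw [← hb, add_sub_cancel_right]; exact h1)
          · have hx1 : x ∈ A (σ (b+1)) := by rw [h2]; exact hf b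
            have ha : b + 1 = a := hσ (hAmem hx1 h1)
            exact h1' (by rw [← ha, add_sub_cancel_right]; exact h2)
          · exact hab (hσ (hAmem h1 h2))
        · obtain ⟨a, rfl⟩ := hi
          push_neg at hj
          rw [hBo j hj] at hxj
          rw [hmemB] at hxi
          rcases hxi with h1 | ⟨h1, -⟩
          · have hx1 : x ∈ A (σ (a+1)) := by rw [h1]; exact hf a
            exact hj (a+1) (hAmem hx1 hxj)
          · exact hj a (hAmem h1 hxj)
        · obtain ⟨b, rfl⟩ := hj
          push_neg at hi
          rw [hBo i hi] at hxi
          rw [hmemB] at hxj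
          rcases hxj with h1 | ⟨h1, -⟩
          · have hx1 : x ∈ A (σ (b+1)) := by rw [h1]; exact hf b
            exact hi (b+1) (hAmem hx1 hxi)
          · exact hi b (hAmem h1 hxi)
        · push_neg at hi hj
          rw [hBo i hi] at hxi; rw [hBo j hj] at hxj
          exact Finset.disjoint_left.mp (hdisjA i j hij) hxi hxj
      have hcards : (Finset.univ.biUnion B).card = (Finset.univ.biUnion A).card := by
        rw [Finset.card_biUnion (fun i _ j _ hij => hBdisj i j hij),
          Finset.card_biUnion (fun i _ j _ hij => hdisjA i j hij)]
        exact Finset.sum_congr rfl (fun i _ => hBcard i)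
      have hBsub : Finset.univ.biUnion B ⊆ Finset.univ.biUnion A := by
        intro x hx
        rw [Finset.mem_biUnion] at hx ⊢
        obtain ⟨j, -, hxj⟩ := hx
        by_cases hex : ∃ t, σ t = j
        · obtain ⟨t, rfl⟩ := hex
          rw [hmemB] at hxj
          rcases hxj with h1 | ⟨h1, -⟩
          · exact ⟨σ (t+1), Finset.mem_univ _, by rw [h1]; exact hf t⟩
          · exact ⟨σ t, Finset.mem_univ _, h1⟩
        · push_neg at hex
          rw [hBo j hex] at hxj
          exact ⟨j, Finset.mem_univ _, hxj⟩
      have hBunion : Finset.univ.biUnion B = Finset.univ.biUnion A :=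
        Finset.eq_of_subset_of_card_le hBsub (le_of_eq hcards.symm)
      have hWle := hmax B hBdisj (fun i => by rw [hBcard, hcardA]) hBunion
      have hgt : ∀ t, ∑ o ∈ B (σ t), val (σ t) o
          = ∑ o ∈ A (σ t), val (σ t) o + (val (σ t) (ff t) - val (σ t) (ff (t-1))) := by
        intro t
        rw [hBσ t, Finset.sum_insert (fun hh => hftA t (Finset.mem_of_mem_erase hh)),
          Finset.sum_erase_eq_sub (hfprev t)]
        ring
      have hsplit : ∑ i, ∑ o ∈ B i, val i o
          = ∑ i, ∑ o ∈ A i, val i o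
            + ∑ t : Fin cl.length, (val (σ t) (ff t) - val (σ t) (ff (t-1))) := by
        have hzero : ∀ i ∈ Finset.univ, i ∉ Finset.univ.image σ →
            (∑ o ∈ B i, val i o - ∑ o ∈ A i, val i o) = 0 := by
          intro i _ hi
          rw [hBo i (fun t ht => hi (Finset.mem_image.mpr ⟨t, Finset.mem_univ _, ht⟩))]
          ring
        have h1 : ∑ i ∈ Finset.univ.image σ, (∑ o ∈ B i, val i o - ∑ o ∈ A i, val i o)
            = ∑ i, (∑ o ∈ B i, val i o - ∑ o ∈ A i, val i o) :=
          Finset.sum_subset (Finset.subset_univ _) hzero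
        have h2 : ∑ i ∈ Finset.univ.image σ, (∑ o ∈ B i, val i o - ∑ o ∈ A i, val i o)
            = ∑ t : Fin cl.length,
                (∑ o ∈ B (σ t), val (σ t) o - ∑ o ∈ A (σ t), val (σ t) o) :=
          Finset.sum_image (fun a _ b _ h => hσ h)
        have h3 : ∀ t : Fin cl.length,
            ∑ o ∈ B (σ t), val (σ t) o - ∑ o ∈ A (σ t), val (σ t) o
              = val (σ t) (ff t) - val (σ t) (ff (t-1)) := fun t => by rw [hgt t]; ring
        rw [Finset.sum_congr rfl (fun t _ => h3 t)] at h2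
        have h4 : ∑ i, (∑ o ∈ B i, val i o - ∑ o ∈ A i, val i o)
            = ∑ i, ∑ o ∈ B i, val i o - ∑ i, ∑ o ∈ A i, val i o := Finset.sum_sub_distrib _ _
        linarith [h1, h2, h4]
      have htel2 : ∑ t : Fin cl.length, val (σ t) (ff (t - 1))
          = ∑ t : Fin cl.length, val (σ (t+1)) (ff t) := by
        refine (Fintype.sum_equiv (Equiv.addRight (1 : Fin cl.length))
          (fun t => val (σ (t+1)) (ff t)) (fun t => val (σ t) (ff (t - 1))) ?_).symm
        intro t
        simp only [Equiv.coe_addRight]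
        rw [add_sub_cancel_right]
      have e1 : ∑ t : Fin cl.length, (val (σ t) (ff t) - val (σ (t+1)) (ff t))
          = ∑ t : Fin cl.length, (val (σ t) (ff t) - val (σ t) (ff (t-1))) := by
        rw [Finset.sum_sub_distrib, Finset.sum_sub_distrib, htel2]
      rw [e1]
      rw [hsplit] at hWle
      linarith
    have hsum : ∑ t : Fin cl.length,
        ∑ ff ∈ P, (val (σ t) (ff t) - val (σ (t+1)) (ff t)) ≤ 0 := by
      rw [Finset.sum_comm]
      exact Finset.sum_nonpos hkey
    set K : Fin cl.length → ℝ :=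
      fun t => ∏ s ∈ Finset.univ.erase t, ((S s).card : ℝ) with hKdef
    have hScard : ∀ s : Fin cl.length, ((S s).card : ℝ) = W (σ (s + 1)) := by
      intro s
      simp only [hSdef, hWdef, hcardA]
    have hedge : ∀ t : Fin cl.length,
        ∑ ff ∈ P, (val (σ t) (ff t) - val (σ (t+1)) (ff t))
          = K t * (v (σ t) (σ (t+1)) - v (σ (t+1)) (σ (t+1))) := by
      intro t
      rw [hPdef, sum_piFinset_eval S t (fun o => val (σ t) o - val (σ (t+1)) o)]
      congr 1
      rw [Finset.sum_sub_distrib, hv, hv]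
    set N : ℝ := ∏ s : Fin cl.length, ((S s).card : ℝ) with hNdef
    have hNpos : 0 < N := Finset.prod_pos (fun s _ => by rw [hScard]; exact hWpos _)
    have hKw : ∀ t, K t * W (σ (t+1)) = N := by
      intro t
      rw [hNdef, Finset.prod_eq_mul_prod_sdiff_singleton_of_mem (Finset.mem_univ t)
        (fun s => ((S s).card : ℝ)), ← Finset.erase_eq, hScard, hKdef]
      ring
    have hfinal : ∑ t : Fin cl.length,
        (v (σ t) (σ (t+1)) - v (σ (t+1)) (σ (t+1))) / W (σ (t+1)) ≤ 0 := by
      have h1 : ∀ t : Fin cl.length,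
          K t * (v (σ t) (σ (t+1)) - v (σ (t+1)) (σ (t+1)))
            = N * ((v (σ t) (σ (t+1)) - v (σ (t+1)) (σ (t+1))) / W (σ (t+1))) := by
        intro t
        rw [← hKw t]
        have hWne := (hWpos (σ (t+1))).ne'
        field_simp
      have h2 : N * ∑ t : Fin cl.length,
          (v (σ t) (σ (t+1)) - v (σ (t+1)) (σ (t+1))) / W (σ (t+1)) ≤ 0 := by
        rw [Finset.mul_sum]
        calc ∑ t : Fin cl.length,
            N * ((v (σ t) (σ (t+1)) - v (σ (t+1)) (σ (t+1))) / W (σ (t+1)))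
            = ∑ t : Fin cl.length,
              ∑ ff ∈ P, (val (σ t) (ff t) - val (σ (t+1)) (ff t)) := by
              refine Finset.sum_congr rfl (fun t _ => ?_)
              rw [hedge t, h1 t]
          _ ≤ 0 := hsum
      nlinarith
    rw [hcyc]
    have e4 : ∀ t : Fin cl.length, envyCost v W (σ t) (σ (t+1))
        = (v (σ t) (σ (t+1)) - v (σ (t+1)) (σ (t+1))) / W (σ (t+1))
          + (v (σ (t+1)) (σ (t+1)) / W (σ (t+1)) - v (σ t) (σ t) / W (σ t)) := by
      intro t
      simp only [envyCost]
      ring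
    have e3 : ∑ t : Fin cl.length, v (σ (t+1)) (σ (t+1)) / W (σ (t+1))
        = ∑ t : Fin cl.length, v (σ t) (σ t) / W (σ t) :=
      htel (fun i => v i i / W i)
    rw [Finset.sum_congr rfl (fun t _ => e4 t), Finset.sum_add_distrib,
      Finset.sum_sub_distrib, e3]
    simpa using hfinal

lemma wefable_of_cycles {n : ℕ} (v : Fin n → Fin n → ℝ) (w : Fin n → ℕ) (hw : ∀ i, 1 ≤ w i)
    (hcyc : ∀ c : List (Fin n), c ≠ [] →
      cycleCost (envyCost v (fun i => (w i : ℝ))) c ≤ 0) :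
    ∃ s : Fin n → ℝ, (∀ i, 0 ≤ s i) ∧ IsWEF v (fun i => (w i : ℝ)) s := by
  classical
  set W : Fin n → ℝ := fun i => (w i : ℝ) with hWdef
  set E : Fin n → Fin n → ℝ := envyCost v W with hEdef
  have hWpos : ∀ i, 0 < W i := fun i => by
    simp only [hWdef]; exact_mod_cast hw i
  have hfin : ∀ i, (pathCostsFrom E i).Finite := by
    intro i
    have hsub : pathCostsFrom E i ⊆ (pathCost E) '' {p : List (Fin n) | p.length ≤ n} := by
      rintro x ⟨p, _, hp2, _, hp4⟩
      exact ⟨p, by simpa using hp2.length_le_card, hp4⟩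
    exact (((List.finite_length_le (Fin n) n)).image _).subset hsub
  have hne' : ∀ i, (0:ℝ) ∈ pathCostsFrom E i := by
    intro i
    exact ⟨[i], by simp, by simp, rfl, by simp [pathCost]⟩
  set M : Fin n → ℝ := fun i => sSup (pathCostsFrom E i) with hMdef
  have hM0 : ∀ i, 0 ≤ M i := fun i => le_csSup (hfin i).bddAbove (hne' i)
  have hkey : ∀ i j, E i j + M j ≤ M i := by
    intro i j
    have hmem : M j ∈ pathCostsFrom E j :=
      Set.Nonempty.csSup_mem ⟨0, hne' j⟩ (hfin j)
    obtain ⟨p, hp1, hp2, hp3, hp4⟩ := hmem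
    have hstep : pathCost E (i :: p) = E i j + M j := by
      cases p with
      | nil => exact absurd rfl hp1
      | cons a p' =>
        have ha : a = j := by simpa using hp3
        subst ha
        rw [pathCost_cons_cons, hp4]
    by_cases hi : i ∈ p
    · obtain ⟨q, rr, hqr⟩ := List.append_of_mem hi
      have hcost : pathCost E (i :: p)
          = pathCost E ((i :: q) ++ [i]) + pathCost E (i :: rr) := by
        rw [hqr]
        exact pathCost_append_cons E (i :: q) i rr
      have hc0 : pathCost E ((i :: q) ++ [i]) ≤ 0 := by
        rw [← cycleCost_eq]
        exact hcyc (i :: q) (by simp)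
      have hsub2 : pathCost E (i :: rr) ≤ M i := by
        apply le_csSup (hfin i).bddAbove
        refine ⟨i :: rr, by simp, ?_, by simp, rfl⟩
        exact List.Nodup.of_append_right (l₁ := q) (hqr ▸ hp2)
      linarith [hstep, hcost, hc0, hsub2]
    · have hmem2 : pathCost E (i :: p) ∈ pathCostsFrom E i :=
        ⟨i :: p, by simp, List.nodup_cons.mpr ⟨hi, hp2⟩, by simp, rfl⟩
      have := le_csSup (hfin i).bddAbove hmem2
      linarith [hstep]
  refine ⟨fun i => W i * M i, fun i => mul_nonneg (le_of_lt (hWpos i)) (hM0 i), ?_⟩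
  intro i j
  have h1 : (v i j + W j * M j) / W j = v i j / W j + M j := by
    rw [add_div, mul_div_cancel_left₀ _ (hWpos j).ne']
  have h2 : (v i i + W i * M i) / W i = v i i / W i + M i := by
    rw [add_div, mul_div_cancel_left₀ _ (hWpos i).ne']
  have h3 := hkey i j
  have hE : E i j = v i j / W j - v i i / W i := rfl
  show (v i j + W j * M j) / W j ≤ (v i i + W i * M i) / W i
  rw [h1, h2]
  linarith


/-- Expected-swap argument: if every agent gets exactly wᵢ items and the
allocation maximizes total welfare among all such allocations of the same item
set, then every cycle in the weighted envy graph has nonpositive cost; hence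
the allocation is WEF-able. -/
theorem exact_weights_max_welfare_wefable {n m : ℕ}
    (w : Fin n → ℕ) (hw : ∀ i, 1 ≤ w i)
    (val : Fin n → Fin m → ℝ)
    (A : Fin n → Finset (Fin m))
    (hdisjA : ∀ i j, i ≠ j → Disjoint (A i) (A j))
    (hcardA : ∀ i, (A i).card = w i)
    (hmax : ∀ B : Fin n → Finset (Fin m),
      (∀ i j, i ≠ j → Disjoint (B i) (B j)) →
      (∀ i, (B i).card = w i) →
      (Finset.univ.biUnion B = Finset.univ.biUnion A) →
      ∑ i, ∑ o ∈ B i, val i o ≤ ∑ i, ∑ o ∈ A i, val i o)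
    (v : Fin n → Fin n → ℝ) (hv : ∀ i j, v i j = ∑ o ∈ A j, val i o) :
    (∀ c : List (Fin n), c ≠ [] →
        cycleCost (envyCost v (fun i => (w i : ℝ))) c ≤ 0) ∧
    (∃ s : Fin n → ℝ, (∀ i, 0 ≤ s i) ∧ IsWEF v (fun i => (w i : ℝ)) s) := by
  have hcyc : ∀ c : List (Fin n), c ≠ [] →
      cycleCost (envyCost v (fun i => (w i : ℝ))) c ≤ 0 :=
    cycle_nonpos_of_nodup _
      (fun cl hne hnd => nodup_cycle_core w hw val A hdisjA hcardA hmax v hv cl hne hnd)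
  exact ⟨hcyc, wefable_of_cycles v w hw hcyc⟩
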